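/- Let d ≥ 1, let 0 < ε ≤ 1, let r > 0, and let P be a finite nonempty set of points of Euclidean space ℝ^d contained in the closed ball of radius r around some point c₀. Then there exists a nonempty subset S ⊆ P with |S| ≤ ⌈2/ε⌉ + 1 such that for every minimum enclosing ball (c, ρ) of S — i.e., every pair with S ⊆ closedBall(c, ρ) and ρ ≤ ρ' whenever S ⊆ closedBall(c', ρ') — the entire set P is contained in the closed ball of radius (1 + ε)·r around c. -/

import Mathlib

open Metric Finset

section Halfspace

variable {E : Type*} [NormedAddCommGroup E] [InnerProductSpace ℝ E]

/-- Half-space lemma: if `(c, ρ)` is a minimum enclosing ball of a finite nonempty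
set `S`, then for every point `x` there is `s ∈ S` with
`ρ² + dist c x² ≤ dist s x²`. -/
lemma meb_halfspace (S : Finset E) (hS : S.Nonempty) (c : E) (ρ : ℝ)
    (hcov : ∀ s ∈ S, dist s c ≤ ρ)
    (hmin : ∀ (c' : E) (ρ' : ℝ), (∀ s ∈ S, dist s c' ≤ ρ') → ρ ≤ ρ')
    (x : E) : ∃ s ∈ S, ρ ^ 2 + dist c x ^ 2 ≤ dist s x ^ 2 := by
  obtain ⟨s₀, hs₀⟩ := hS
  have hρ0 : 0 ≤ ρ := dist_nonneg.trans (hcov s₀ hs₀)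
  by_contra hcon
  push_neg at hcon
  set w := x - c with hw
  have hb : ∀ s ∈ S, 0 < 2 * (inner ℝ (s - c) w : ℝ) - (‖s - c‖ ^ 2 - ρ ^ 2) := by
    intro s hs
    have h1 := hcon s hs
    have h2 : dist s x ^ 2 = ‖s - c‖ ^ 2 - 2 * (inner ℝ (s - c) w : ℝ) + ‖w‖ ^ 2 := by
      rw [dist_eq_norm, show s - x = (s - c) - w by rw [hw]; abel]
      exact norm_sub_sq_real _ _
    have h3 : dist c x = ‖w‖ := by rw [dist_eq_norm, hw, norm_sub_rev]
    rw [h3] at h1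
    linarith [h2 ▸ h1]
  set f : E → ℝ := fun s => (2 * (inner ℝ (s - c) w : ℝ) - (‖s - c‖ ^ 2 - ρ ^ 2)) / (2 * (‖w‖ ^ 2 + 1)) with hf
  have hwpos : (0:ℝ) < 2 * (‖w‖ ^ 2 + 1) := by positivity
  set t := min 1 (S.inf' ⟨s₀, hs₀⟩ f) with ht
  have htpos : 0 < t := by
    apply lt_min one_pos
    refine (Finset.lt_inf'_iff _).2 ?_
    intro s hs
    exact div_pos (hb s hs) hwpos
  have hkey : ∀ s ∈ S, dist s (c + t • w) < ρ := by
    intro s hs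
    have hts : t ≤ f s := (min_le_right _ _).trans (Finset.inf'_le f hs)
    have ht1 : t ≤ 1 := min_le_left _ _
    have hbs := hb s hs
    have hsc : ‖s - c‖ ^ 2 ≤ ρ ^ 2 := by
      have h := hcov s hs
      rw [dist_eq_norm] at h
      nlinarith [norm_nonneg (s - c)]
    have hexp : dist s (c + t • w) ^ 2
        = ‖s - c‖ ^ 2 - 2 * (t * (inner ℝ (s - c) w : ℝ)) + t ^ 2 * ‖w‖ ^ 2 := by
      rw [dist_eq_norm, show s - (c + t • w) = (s - c) - t • w by abel]
      rw [norm_sub_sq_real, real_inner_smul_right, norm_smul]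
      simp only [Real.norm_eq_abs, mul_pow, sq_abs]
      try ring
    have hfs : t * (2 * (‖w‖ ^ 2 + 1)) ≤ 2 * (inner ℝ (s - c) w : ℝ) - (‖s - c‖ ^ 2 - ρ ^ 2) := by
      have h := mul_le_mul_of_nonneg_right hts hwpos.le
      rwa [hf, div_mul_cancel₀ _ (ne_of_gt hwpos)] at h
    have hlt : dist s (c + t • w) ^ 2 < ρ ^ 2 := by
      nlinarith [mul_le_mul_of_nonneg_left hfs htpos.le, sq_nonneg t, mul_nonneg htpos.le htpos.le]
    nlinarith [dist_nonneg (x := s) (y := c + t • w)]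
  have hle : ρ ≤ S.sup' ⟨s₀, hs₀⟩ (fun s => dist s (c + t • w)) :=
    hmin _ _ fun s hs => Finset.le_sup' (fun s => dist s (c + t • w)) hs
  have hlt : S.sup' ⟨s₀, hs₀⟩ (fun s => dist s (c + t • w)) < ρ :=
    (Finset.sup'_lt_iff _).mpr hkey
  linarith

end Halfspace

/-- The Bădoiu–Clarkson potential sequence: `u 0 = 1`, `u (n+1) = u n - u n ^ 2 / 2`. -/
noncomputable def bcSeq : ℕ → ℝ
  | 0 => 1
  | n + 1 => bcSeq n - (bcSeq n) ^ 2 / 2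

lemma bcSeq_mem : ∀ n, 0 ≤ bcSeq n ∧ bcSeq n ≤ 1 := by
  intro n
  induction n with
  | zero => norm_num [bcSeq]
  | succ n ih =>
    obtain ⟨h0, h1⟩ := ih
    constructor
    · simp only [bcSeq]; nlinarith
    · simp only [bcSeq]; nlinarith

lemma bcSeq_lt (n : ℕ) (hn : 2 ≤ n) : bcSeq n < 2 / (n + 2) := by
  induction n, hn using Nat.le_induction with
  | base => norm_num [bcSeq]
  | succ n hn ih =>
    obtain ⟨h0, h1⟩ := bcSeq_mem n
    have hn2 : (0:ℝ) < (n:ℝ) + 2 := by positivity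
    have hn3 : (0:ℝ) < (n:ℝ) + 3 := by positivity
    have key : bcSeq n - bcSeq n ^ 2 / 2 < 2 / ((n:ℝ) + 3) := by
      set u := bcSeq n
      have hcu : u < 2 / ((n:ℝ) + 2) := ih
      have hcle : 2 / ((n:ℝ) + 2) ≤ 1 := by
        rw [div_le_one hn2]
        have : (2:ℝ) ≤ (n:ℝ) := by exact_mod_cast hn
        linarith
      have h2 : u - u ^ 2 / 2 < 2 / ((n:ℝ)+2) - (2/((n:ℝ)+2)) ^ 2 / 2 := by
        nlinarith
      have h3 : 2 / ((n:ℝ)+2) - (2/((n:ℝ)+2)) ^ 2 / 2 ≤ 2 / ((n:ℝ) + 3) := by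
        rw [show 2 / ((n:ℝ)+2) - (2/((n:ℝ)+2)) ^ 2 / 2 = (2*(n:ℝ)+2)/(((n:ℝ)+2)^2) by
          field_simp; ring]
        rw [div_le_div_iff₀ (by positivity) hn3]
        nlinarith [Nat.cast_nonneg (α := ℝ) n]
      linarith
    simp only [bcSeq]
    push_cast
    convert key using 2
    ring

set_option maxHeartbeats 1000000 in
/-- Core-set guarantee (Bădoiu–Clarkson): every finite nonempty set `P` in a ball of
radius `r` has a core-set `S ⊆ P` of size at most `⌈2/ε⌉ + 1` such that for every
minimum enclosing ball `(c, ρ)` of `S`, the ball of radius `(1+ε)r` around `c`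
covers `P`. -/
theorem coreset_meb (d : ℕ) (hd : 1 ≤ d) (ε : ℝ) (hε0 : 0 < ε) (hε1 : ε ≤ 1)
    (r : ℝ) (hr : 0 < r) (c₀ : EuclideanSpace ℝ (Fin d))
    (P : Finset (EuclideanSpace ℝ (Fin d))) (hP : P.Nonempty)
    (hPball : ↑P ⊆ Metric.closedBall c₀ r) :
    ∃ S : Finset (EuclideanSpace ℝ (Fin d)), S ⊆ P ∧ S.Nonempty ∧
      S.card ≤ ⌈(2 : ℝ) / ε⌉₊ + 1 ∧
      ∀ (c : EuclideanSpace ℝ (Fin d)) (ρ : ℝ),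
        (↑S ⊆ Metric.closedBall c ρ ∧
          ∀ (c' : EuclideanSpace ℝ (Fin d)) (ρ' : ℝ),
            ↑S ⊆ Metric.closedBall c' ρ' → ρ ≤ ρ') →
        ↑P ⊆ Metric.closedBall c ((1 + ε) * r) := by
  classical
  set R := (1 + ε) * r with hR
  clear_value R
  have hRpos : 0 < R := by rw [hR]; positivity
  have key : ∀ n : ℕ, ∃ S : Finset (EuclideanSpace ℝ (Fin d)), S ⊆ P ∧ S.Nonempty ∧
      S.card ≤ n + 1 ∧
      ((∀ (c : EuclideanSpace ℝ (Fin d)) (ρ : ℝ),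
        (↑S ⊆ Metric.closedBall c ρ ∧
          ∀ (c' : EuclideanSpace ℝ (Fin d)) (ρ' : ℝ),
            ↑S ⊆ Metric.closedBall c' ρ' → ρ ≤ ρ') →
        ↑P ⊆ Metric.closedBall c R) ∨
      (∀ (c : EuclideanSpace ℝ (Fin d)) (ρ : ℝ),
        (↑S ⊆ Metric.closedBall c ρ ∧
          ∀ (c' : EuclideanSpace ℝ (Fin d)) (ρ' : ℝ),
            ↑S ⊆ Metric.closedBall c' ρ' → ρ ≤ ρ') →
        (1 - bcSeq n) * R ≤ ρ)) := by
    intro n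
    induction n with
    | zero =>
      obtain ⟨p₀, hp₀⟩ := hP
      refine ⟨{p₀}, by simpa using hp₀, ⟨p₀, by simp⟩, by simp, Or.inr ?_⟩
      intro c ρ ⟨hcov, _⟩
      have h1 : dist p₀ c ≤ ρ := by
        have := hcov (by simp : p₀ ∈ (↑({p₀} : Finset (EuclideanSpace ℝ (Fin d))) : Set _))
        simpa [Metric.mem_closedBall] using this
      have : 0 ≤ ρ := dist_nonneg.trans h1
      simp only [bcSeq]
      linarith
    | succ n ih =>
      obtain ⟨S, hSP, hSne, hScard, hS⟩ := ih
      rcases hS with hgood | hinv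
      · exact ⟨S, hSP, hSne, hScard.trans (by omega), Or.inl hgood⟩
      by_cases hgood : (∀ (c : EuclideanSpace ℝ (Fin d)) (ρ : ℝ),
          (↑S ⊆ Metric.closedBall c ρ ∧
            ∀ (c' : EuclideanSpace ℝ (Fin d)) (ρ' : ℝ),
              ↑S ⊆ Metric.closedBall c' ρ' → ρ ≤ ρ') →
          ↑P ⊆ Metric.closedBall c R)
      · exact ⟨S, hSP, hSne, hScard.trans (by omega), Or.inl hgood⟩
      push_neg at hgood
      obtain ⟨c, ρ, hmeb, hout⟩ := hgood
      rw [Set.not_subset] at hout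
      obtain ⟨p, hpP, hpout⟩ := hout
      have hpP' : p ∈ P := by exact_mod_cast hpP
      have hpd : R < dist p c := by
        simpa [Metric.mem_closedBall, not_le] using hpout
      refine ⟨insert p S, Finset.insert_subset hpP' hSP, ⟨p, Finset.mem_insert_self _ _⟩,
        (Finset.card_insert_le _ _).trans (by omega), Or.inr ?_⟩
      intro c' ρ' ⟨hcov', hmin'⟩
      have hρ : (1 - bcSeq n) * R ≤ ρ := hinv c ρ hmeb
      obtain ⟨hcov, hmin⟩ := hmeb
      have hρ0 : 0 ≤ ρ := by
        obtain ⟨s₀, hs₀⟩ := hSne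
        exact dist_nonneg.trans
          (by simpa [Metric.mem_closedBall] using hcov (Finset.mem_coe.mpr hs₀))
      have hρ'p : dist p c' ≤ ρ' := by
        simpa [Metric.mem_closedBall] using
          hcov' (by simp : p ∈ (↑(insert p S) : Set (EuclideanSpace ℝ (Fin d))))
      have hρ'0 : 0 ≤ ρ' := dist_nonneg.trans hρ'p
      obtain ⟨s, hsS, hsq⟩ := meb_halfspace S hSne c ρ
        (fun s hs => by simpa [Metric.mem_closedBall] using hcov (Finset.mem_coe.mpr hs))
        (fun c'' ρ'' h => hmin c'' ρ''
          (fun y hy => Metric.mem_closedBall.mpr (h y (Finset.mem_coe.mp hy))))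
        c'
      have hsd : dist s c' ≤ ρ' := by
        have hmem : s ∈ (↑(insert p S) : Set (EuclideanSpace ℝ (Fin d))) := by
          simp only [Finset.coe_insert, Set.mem_insert_iff]
          exact Or.inr hsS
        simpa [Metric.mem_closedBall] using hcov' hmem
      have h2 : ρ ^ 2 + dist c c' ^ 2 ≤ ρ' ^ 2 :=
        hsq.trans (pow_le_pow_left₀ dist_nonneg hsd 2)
      have h3 : R - dist c c' ≤ ρ' := by
        have h4 := dist_triangle p c' c
        rw [dist_comm c' c] at h4
        linarith
      obtain ⟨hu0, hu1⟩ := bcSeq_mem n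
      set t₀ := 1 - bcSeq n with ht₀
      clear_value t₀
      have ht₀0 : 0 ≤ t₀ := by simp only [ht₀]; linarith
      have ht₀1 : t₀ ≤ 1 := by simp only [ht₀]; linarith
      have hgoal : (1 + t₀ ^ 2) / 2 * R ≤ ρ' := by
        set d₀ := dist c c' with hd₀
        clear_value d₀
        have hd₀0 : 0 ≤ d₀ := by rw [hd₀]; exact dist_nonneg
        by_cases hcase : d₀ ≤ (1 - t₀ ^ 2) * R / 2
        · nlinarith
        · push_neg at hcase
          have hρsq : t₀ ^ 2 * R ^ 2 ≤ ρ ^ 2 := by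
            nlinarith [mul_le_mul hρ hρ (mul_nonneg ht₀0 hRpos.le) hρ0]
          have ht2 : (0:ℝ) ≤ 1 - t₀ ^ 2 := by nlinarith
          have ha : (0:ℝ) ≤ (1 - t₀ ^ 2) * R / 2 := by
            have := mul_nonneg ht2 hRpos.le
            linarith
          have hd2 : ((1 - t₀ ^ 2) * R / 2) ^ 2 ≤ d₀ ^ 2 := by
            exact pow_le_pow_left₀ ha hcase.le 2
          have hm : 0 < (1 + t₀ ^ 2) / 2 * R := by positivity
          have hiden : ((1 + t₀ ^ 2) / 2 * R) ^ 2
              = t₀ ^ 2 * R ^ 2 + ((1 - t₀ ^ 2) * R / 2) ^ 2 := by ring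
          have hmsq : ((1 + t₀ ^ 2) / 2 * R) ^ 2 ≤ ρ' ^ 2 := by
            rw [hiden]; linarith
          exact (pow_le_pow_iff_left₀ hm.le hρ'0 two_ne_zero).mp hmsq
      have heq : (1 - bcSeq (n+1)) * R = (1 + t₀ ^ 2) / 2 * R := by
        simp only [bcSeq, ht₀]; ring
      linarith [heq ▸ hgoal]
  set N := ⌈(2:ℝ)/ε⌉₊ with hN
  clear_value N
  have hN2 : 2 ≤ N := by
    have h : (2:ℝ) ≤ 2 / ε := by
      rw [le_div_iff₀ hε0]; linarith
    calc (2:ℕ) = ⌈(2:ℝ)⌉₊ := by norm_num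
      _ ≤ N := by rw [hN]; exact Nat.ceil_le_ceil h
  have hNge : (2:ℝ) / ε ≤ N := by rw [hN]; exact Nat.le_ceil _
  have huN : bcSeq N < ε / (1 + ε) := by
    have h1 := bcSeq_lt N hN2
    have h2 : 2 / ((N:ℝ) + 2) ≤ ε / (1 + ε) := by
      rw [div_le_div_iff₀ (by positivity) (by positivity)]
      have h5 : 2 ≤ ε * N := by
        rw [div_le_iff₀ hε0] at hNge
        linarith
      nlinarith
    linarith
  obtain ⟨S, hSP, hSne, hScard, hS⟩ := key N
  refine ⟨S, hSP, hSne, hScard, ?_⟩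
  rcases hS with hgood | hinv
  · exact hgood
  · intro c ρ hmeb
    exfalso
    have h1 : (1 - bcSeq N) * R ≤ ρ := hinv c ρ hmeb
    have h2 : ρ ≤ r := hmeb.2 c₀ r (Set.Subset.trans (by exact_mod_cast hSP) hPball)
    have h3 : r < (1 - bcSeq N) * R := by
      rw [hR]
      have h4 : bcSeq N * (1 + ε) < ε := (lt_div_iff₀ (by linarith)).mp huN
      nlinarith [h4, hr]
    linarith
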